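/- Let x_j^i = (√(1−z_j²) cos(2πi/r_j + θ_j), √(1−z_j²) sin(2πi/r_j + θ_j), z_j) for 1 ≤ i ≤ r_j. Then the average over (θ_j, θ_k) ∈ [0,2π]² of −Σ_{l=1}^{r_k} Σ_{i=1}^{r_j} log‖x_j^i − x_k^l‖ equals −r_j r_k (1/2) log(1 − z_j z_k + |z_j − z_k|), provided z_j ≠ z_k. -/

import Mathlib

open Real Complex intervalIntegral Metric

private lemma re_pos (ρ : ℝ) (hρ : |ρ| < 1) (z : ℂ) (hz : ‖z‖ ≤ 1) :
    0 < (1 - ρ * z).re := by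
  have h2 : ((ρ:ℂ) * z).re ≤ |ρ| := by
    calc ((ρ:ℂ) * z).re ≤ ‖(ρ:ℂ) * z‖ := Complex.re_le_norm _
    _ = |ρ| * ‖z‖ := by simp [norm_mul]
    _ ≤ |ρ| * 1 := by exact mul_le_mul_of_nonneg_left hz (abs_nonneg ρ)
    _ = |ρ| := mul_one _
  simp only [Complex.sub_re, Complex.one_re]
  linarith

private lemma circ_cont (ρ : ℝ) (hρ : |ρ| < 1) :
    Continuous (fun θ : ℝ => Complex.log (1 - ρ * circleMap 0 1 θ)) := by
  refine continuous_iff_continuousAt.mpr fun θ => ?_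
  have hc : ContinuousAt (fun θ : ℝ => 1 - (ρ:ℂ) * circleMap 0 1 θ) θ := by
    apply ContinuousAt.sub continuousAt_const
    exact continuousAt_const.mul (continuous_circleMap 0 1).continuousAt
  refine (continuousAt_clog ?_).comp hc
  exact Complex.mem_slitPlane_iff.mpr (Or.inl (re_pos ρ hρ _ (by simp)))

private lemma key1 (ρ : ℝ) (hρ : |ρ| < 1) :
    ∫ θ in (0:ℝ)..(2*π), Real.log (1 - 2*ρ*Real.cos θ + ρ^2) = 0 := by
  set f : ℂ → ℂ := fun z => Complex.log (1 - ρ * z) with hf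
  have hd : DiffContOnCl ℂ f (ball (0:ℂ) 1) := by
    apply DifferentiableOn.diffContOnCl
    rw [closure_ball (0:ℂ) one_ne_zero]
    intro z hz
    have hz1 : ‖z‖ ≤ 1 := by simpa [Complex.dist_eq] using hz
    have hg : DifferentiableAt ℂ (fun w : ℂ => 1 - (ρ:ℂ) * w) z := by fun_prop
    have : DifferentiableAt ℂ f z := by
      have h := (Complex.differentiableAt_log
        (Complex.mem_slitPlane_iff.mpr (Or.inl (re_pos ρ hρ z hz1)))).comp z hg
      exact h
    exact this.differentiableWithinAt
  have hI := hd.circleIntegral_sub_inv_smul (show (0:ℂ) ∈ ball (0:ℂ) 1 by simp)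
  rw [circleIntegral] at hI
  have hzero : f 0 = 0 := by simp [hf]
  have hsimp : ∀ θ : ℝ, deriv (circleMap 0 1) θ • ((circleMap 0 1 θ - 0)⁻¹ • f (circleMap 0 1 θ))
      = Complex.I * f (circleMap 0 1 θ) := by
    intro θ
    have hne : circleMap 0 1 θ ≠ 0 := circleMap_ne_center one_ne_zero
    rw [deriv_circleMap]
    simp only [smul_eq_mul, sub_zero]
    field_simp
  rw [hzero, smul_zero] at hI
  simp only [hsimp] at hI
  rw [intervalIntegral.integral_const_mul] at hI
  have hIzero : (∫ θ in (0:ℝ)..(2*π), f (circleMap 0 1 θ)) = 0 := by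
    have := mul_eq_zero.mp hI
    simpa [Complex.I_ne_zero] using this
  have hre : ∀ θ : ℝ, Real.log (1 - 2*ρ*Real.cos θ + ρ^2) = 2 * (f (circleMap 0 1 θ)).re := by
    intro θ
    have hns : Complex.normSq (1 - ρ * circleMap 0 1 θ) = 1 - 2*ρ*Real.cos θ + ρ^2 := by
      rw [Complex.normSq_apply]
      simp only [Complex.sub_re, Complex.sub_im, Complex.one_re, Complex.one_im,
        Complex.mul_re, Complex.mul_im, Complex.ofReal_re, Complex.ofReal_im]
      rw [show (circleMap 0 1 θ).re = Real.cos θ by simp [circleMap],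
        show (circleMap 0 1 θ).im = Real.sin θ by simp [circleMap]]
      nlinarith [Real.sin_sq_add_cos_sq θ]
    rw [hf]
    simp only [Complex.log_re]
    rw [show ‖(1 - ρ * circleMap 0 1 θ)‖ = Real.sqrt (1 - 2*ρ*Real.cos θ + ρ^2) by
      rw [← hns]; exact Complex.norm_def _]
    rw [Real.log_sqrt (by rw [← hns]; exact Complex.normSq_nonneg _)]
    ring
  calc ∫ θ in (0:ℝ)..(2*π), Real.log (1 - 2*ρ*Real.cos θ + ρ^2)
      = ∫ θ in (0:ℝ)..(2*π), 2 * (f (circleMap 0 1 θ)).re := by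
        exact intervalIntegral.integral_congr fun θ _ => hre θ
    _ = 2 * ∫ θ in (0:ℝ)..(2*π), (f (circleMap 0 1 θ)).re := intervalIntegral.integral_const_mul _ _
    _ = 2 * (∫ θ in (0:ℝ)..(2*π), f (circleMap 0 1 θ)).re := by
        congr 1
        rw [intervalIntegral.integral_of_le (by positivity), intervalIntegral.integral_of_le (by positivity)]
        exact integral_re ((circ_cont ρ hρ).integrableOn_Ioc)
    _ = 0 := by rw [hIzero]; simp

private lemma key2 (A B : ℝ) (hB : 0 ≤ B) (hAB : B < A) :
    ∫ θ in (0:ℝ)..(2*π), Real.log (A - B * Real.cos θ)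
      = 2 * π * Real.log ((A + Real.sqrt (A^2 - B^2)) / 2) := by
  have hA : 0 < A := lt_of_le_of_lt hB hAB
  rcases eq_or_lt_of_le hB with hB0 | hB0
  · rw [← hB0]
    simp only [zero_mul, sub_zero]
    rw [intervalIntegral.integral_const, smul_eq_mul]
    rw [show A^2 - 0^2 = A^2 by ring, Real.sqrt_sq hA.le]
    rw [show (A + A)/2 = A by ring]
    ring
  · set s := Real.sqrt (A^2 - B^2) with hs
    have hs2 : s^2 = A^2 - B^2 := Real.sq_sqrt (by nlinarith)
    have hs0 : 0 ≤ s := Real.sqrt_nonneg _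
    have hsA : s < A := by nlinarith
    set ρ := (A - s) / B with hρdef
    set c := (A + s) / 2 with hc
    have hcpos : 0 < c := by positivity
    have hρpos : 0 < ρ := by apply div_pos; linarith; exact hB0
    have hρlt : ρ < 1 := by
      rw [div_lt_one hB0]
      nlinarith
    have hkey : ∀ θ : ℝ, A - B * Real.cos θ = c * (1 - 2*ρ*Real.cos θ + ρ^2) := by
      intro θ
      have h1 : c * (2*ρ) = B := by
        rw [hc, hρdef]; field_simp; nlinarith
      have h2 : c * (1 + ρ^2) = A := by
        have : c * ρ^2 = (B/2) * ρ := by rw [← h1]; ring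
        rw [mul_add, mul_one, this, hρdef, hc]
        field_simp
        ring
      linear_combination Real.cos θ * h1 - h2
    have hpos : ∀ θ : ℝ, 0 < 1 - 2*ρ*Real.cos θ + ρ^2 := by
      intro θ
      have h1 : A - B * Real.cos θ > 0 := by
        nlinarith [Real.neg_one_le_cos θ, Real.cos_le_one θ]
      nlinarith [hkey θ]
    have hlog : ∀ θ : ℝ, Real.log (A - B * Real.cos θ)
        = Real.log c + Real.log (1 - 2*ρ*Real.cos θ + ρ^2) := by
      intro θ
      rw [hkey θ, Real.log_mul hcpos.ne' (hpos θ).ne']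
    rw [intervalIntegral.integral_congr (fun θ _ => hlog θ)]
    have hint : IntervalIntegrable (fun θ => Real.log (1 - 2*ρ*Real.cos θ + ρ^2))
        MeasureTheory.volume 0 (2*π) := by
      apply Continuous.intervalIntegrable
      have hg : Continuous fun θ : ℝ => 1 - 2*ρ*Real.cos θ + ρ^2 := by fun_prop
      exact continuous_iff_continuousAt.mpr fun t =>
        hg.continuousAt.log (hpos t).ne'
    rw [intervalIntegral.integral_add intervalIntegrable_const hint]
    rw [key1 ρ (by rw [abs_of_pos hρpos]; exact hρlt)]
    rw [intervalIntegral.integral_const, smul_eq_mul]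
    ring

private lemma key3 (A B : ℝ) (hB : 0 ≤ B) (hAB : B < A) (φ : ℝ) :
    ∫ θ in (0:ℝ)..(2*π), Real.log (A - B * Real.cos (θ + φ))
      = 2 * π * Real.log ((A + Real.sqrt (A^2 - B^2)) / 2) := by
  rw [← key2 A B hB hAB]
  have hper : Function.Periodic (fun θ => Real.log (A - B * Real.cos θ)) (2*π) := by
    intro θ; simp [Real.cos_add_two_pi]
  calc ∫ θ in (0:ℝ)..(2*π), Real.log (A - B * Real.cos (θ + φ))
      = ∫ θ in (0 + φ)..(2*π + φ), Real.log (A - B * Real.cos θ) :=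
        intervalIntegral.integral_comp_add_right (fun θ => Real.log (A - B * Real.cos θ)) φ
    _ = ∫ θ in φ..(φ + 2*π), Real.log (A - B * Real.cos θ) := by
        rw [zero_add, add_comm (2*π) φ]
    _ = ∫ θ in (0:ℝ)..(0 + 2*π), Real.log (A - B * Real.cos θ) :=
        hper.intervalIntegral_add_eq φ 0
    _ = ∫ θ in (0:ℝ)..(2*π), Real.log (A - B * Real.cos θ) := by rw [zero_add]

theorem stmt6 (zj zk : ℝ) (hj : zj ∈ Set.Ioo (-1:ℝ) 1) (hk : zk ∈ Set.Ioo (-1:ℝ) 1)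
    (hne : zj ≠ zk) (rj rk : ℕ) (hrj : 0 < rj) (hrk : 0 < rk)
    (x : ℝ → ℕ → EuclideanSpace ℝ (Fin 3)) (y : ℝ → ℕ → EuclideanSpace ℝ (Fin 3))
    (hx : ∀ θ i, x θ i = ![Real.sqrt (1 - zj ^ 2) * Real.cos (2 * π * i / rj + θ),
      Real.sqrt (1 - zj ^ 2) * Real.sin (2 * π * i / rj + θ), zj])
    (hy : ∀ θ l, y θ l = ![Real.sqrt (1 - zk ^ 2) * Real.cos (2 * π * l / rk + θ),
      Real.sqrt (1 - zk ^ 2) * Real.sin (2 * π * l / rk + θ), zk]) :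
    (1 / (4 * π ^ 2)) *
      ∫ θj in (0:ℝ)..(2 * π), ∫ θk in (0:ℝ)..(2 * π),
        -∑ l ∈ Finset.Icc 1 rk, ∑ i ∈ Finset.Icc 1 rj, Real.log ‖x θj i - y θk l‖
      = -(rj : ℝ) * (rk : ℝ) * ((1 / 2) * Real.log (1 - zj * zk + |zj - zk|)) := by
  obtain ⟨hj1, hj2⟩ := hj
  obtain ⟨hk1, hk2⟩ := hk
  set sj := Real.sqrt (1 - zj ^ 2) with hsj
  set sk := Real.sqrt (1 - zk ^ 2) with hsk
  have sj2 : sj ^ 2 = 1 - zj ^ 2 := Real.sq_sqrt (by nlinarith)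
  have sk2 : sk ^ 2 = 1 - zk ^ 2 := Real.sq_sqrt (by nlinarith)
  have sjnn : 0 ≤ sj := Real.sqrt_nonneg _
  have sknn : 0 ≤ sk := Real.sqrt_nonneg _
  set A := 2 - 2 * zj * zk with hA
  set B := 2 * sj * sk with hB
  have hBnn : 0 ≤ B := by positivity
  have hzz : zj * zk < 1 := by nlinarith
  have hBA : B < A := by
    have hzne : zj - zk ≠ 0 := sub_ne_zero.mpr hne
    have hsq : (zj - zk) ^ 2 > 0 := by positivity
    nlinarith [sq_nonneg (sj * sk), mul_self_nonneg (sj*sk)]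
  have hApos : 0 < A := lt_of_le_of_lt hBnn hBA
  have hsAB : Real.sqrt (A ^ 2 - B ^ 2) = 2 * |zj - zk| := by
    have h1 : A ^ 2 - B ^ 2 = (2 * |zj - zk|) ^ 2 := by
      have habs : |zj - zk| ^ 2 = (zj - zk) ^ 2 := _root_.sq_abs _
      linear_combination (-(4:ℝ) * sk ^ 2) * sj2 + (-(4:ℝ) * (1 - zj ^ 2)) * sk2
        - (4:ℝ) * habs
    rw [h1, Real.sqrt_sq (by positivity)]
  have hcval : (A + Real.sqrt (A ^ 2 - B ^ 2)) / 2 = 1 - zj * zk + |zj - zk| := by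
    rw [hsAB, hA]; ring
  -- pointwise norm identity
  have hnorm : ∀ θj θk : ℝ, ∀ i l : ℕ,
      Real.log ‖x θj i - y θk l‖ = (1/2) *
        Real.log (A - B * Real.cos (θk + (2 * π * l / rk - (2 * π * i / rj + θj)))) := by
    intro θj θk i l
    set α := 2 * π * i / rj + θj with hα
    set β := 2 * π * l / rk + θk with hβ
    have hcos : Real.cos (θk + (2 * π * l / rk - α)) = Real.cos (α - β) := by
      rw [← Real.cos_neg (α - β)]
      congr 1
      rw [hβ]; ring
    have hpos : 0 < A - B * Real.cos (α - β) := by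
      nlinarith [Real.neg_one_le_cos (α - β), Real.cos_le_one (α - β)]
    have hne : ‖x θj i - y θk l‖ = Real.sqrt (A - B * Real.cos (α - β)) := by
      rw [EuclideanSpace.norm_eq]
      congr 1
      rw [Fin.sum_univ_three]
      simp only [PiLp.sub_apply, hx, hy, Matrix.cons_val_zero, Matrix.cons_val_one, Matrix.head_cons,
        Matrix.cons_val_two, Matrix.tail_cons, Real.norm_eq_abs, _root_.sq_abs]
      rw [Real.cos_sub]
      have pj := Real.sin_sq_add_cos_sq α
      have pk := Real.sin_sq_add_cos_sq β
      linear_combination (sj ^ 2) * pj + (sk ^ 2) * pk + sj2 + sk2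
    rw [hne, hcos, Real.log_sqrt hpos.le]
    ring
  -- inner integral
  have hcont : ∀ φ : ℝ, Continuous fun θ : ℝ => Real.log (A - B * Real.cos (θ + φ)) := by
    intro φ
    have hg : Continuous fun θ : ℝ => A - B * Real.cos (θ + φ) := by fun_prop
    refine continuous_iff_continuousAt.mpr fun t => hg.continuousAt.log ?_
    have : 0 < A - B * Real.cos (t + φ) := by
      nlinarith [Real.neg_one_le_cos (t + φ), Real.cos_le_one (t + φ)]
    exact this.ne'
  have hinner : ∀ θj : ℝ,
      (∫ θk in (0:ℝ)..(2 * π),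
        -∑ l ∈ Finset.Icc 1 rk, ∑ i ∈ Finset.Icc 1 rj, Real.log ‖x θj i - y θk l‖)
      = -(rk : ℝ) * rj * (π * Real.log (1 - zj * zk + |zj - zk|)) := by
    intro θj
    have hrw : ∀ θk : ℝ,
        (-∑ l ∈ Finset.Icc 1 rk, ∑ i ∈ Finset.Icc 1 rj, Real.log ‖x θj i - y θk l‖)
        = -∑ l ∈ Finset.Icc 1 rk, ∑ i ∈ Finset.Icc 1 rj, (1/2) *
            Real.log (A - B * Real.cos (θk + (2 * π * l / rk - (2 * π * i / rj + θj)))) := by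
      intro θk
      congr 1
      exact Finset.sum_congr rfl fun l _ => Finset.sum_congr rfl fun i _ => hnorm θj θk i l
    rw [intervalIntegral.integral_congr (fun θk _ => hrw θk)]
    rw [intervalIntegral.integral_neg]
    have hsum : (∫ θk in (0:ℝ)..(2 * π),
        ∑ l ∈ Finset.Icc 1 rk, ∑ i ∈ Finset.Icc 1 rj, (1/2) *
          Real.log (A - B * Real.cos (θk + (2 * π * l / rk - (2 * π * i / rj + θj)))))
        = ∑ l ∈ Finset.Icc 1 rk, ∑ i ∈ Finset.Icc 1 rj, (1/2) *
          (2 * π * Real.log (1 - zj * zk + |zj - zk|)) := by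
      rw [intervalIntegral.integral_finset_sum]
      · refine Finset.sum_congr rfl fun l _ => ?_
        rw [intervalIntegral.integral_finset_sum]
        · refine Finset.sum_congr rfl fun i _ => ?_
          rw [intervalIntegral.integral_const_mul, key3 A B hBnn hBA, hcval]
        · intro i _
          exact (continuous_const.mul (hcont _)).intervalIntegrable _ _
      · intro l _
        apply Continuous.intervalIntegrable
        exact continuous_finset_sum _ fun i _ => continuous_const.mul (hcont _)
    rw [hsum]
    simp only [Finset.sum_const, Nat.card_Icc, nsmul_eq_mul]
    push_cast
    ring
  rw [intervalIntegral.integral_congr (fun θj _ => hinner θj)]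
  rw [intervalIntegral.integral_const, smul_eq_mul]
  have hπ : (π : ℝ) ≠ 0 := Real.pi_ne_zero
  field_simp
  ring
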